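/- Let N ≥ 1 and s ∈ ℕ, s ≥ 1. Let (μ_n) be a sequence of Borel probability measures on ℝ^N, each with finite absolute moments up to order s, such that for every multi-index β with |β| ≤ s the moment ∫ v^β dμ_n(v) = M_β is the same for all n. Let μ be a Borel probability measure on ℝ^N with finite absolute moments up to order s such that d_s(μ_n, μ) → 0 as n → ∞. Then ∫ v^β dμ(v) = M_β for every multi-index β with |β| ≤ s. -/

import Mathlib

open MeasureTheory Filter Topology ENNReal

noncomputable def charFun' {N : ℕ} (μ : Measure (EuclideanSpace ℝ (Fin N)))
    (x : EuclideanSpace ℝ (Fin N)) : ℂ :=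
  ∫ v, Complex.exp (-(((inner ℝ x v : ℝ) : ℂ) * Complex.I)) ∂μ

noncomputable def dFourier {N : ℕ} (s : ℝ)
    (μ ν : Measure (EuclideanSpace ℝ (Fin N))) : ℝ≥0∞ :=
  ⨆ (x : EuclideanSpace ℝ (Fin N)) (_ : x ≠ 0),
    ENNReal.ofReal (‖charFun' μ x - charFun' ν x‖ / ‖x‖ ^ s)

section ExpTaylor
open Complex Finset

lemma hasDerivAt_expsum (n : ℕ) (z : ℂ) :
    HasDerivAt (fun z : ℂ => Complex.exp (z * I) - ∑ k ∈ range (n+1), (z*I)^k / k.factorial)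
      (I * (Complex.exp (z * I) - ∑ k ∈ range n, (z*I)^k / k.factorial)) z := by
  have h1 : HasDerivAt (fun z : ℂ => Complex.exp (z * I)) (I * Complex.exp (z*I)) z := by
    simpa [mul_comm, Function.comp_def] using ((Complex.hasDerivAt_exp (z*I)).comp z ((hasDerivAt_id z).mul_const I))
  have h2 : HasDerivAt (fun z : ℂ => ∑ k ∈ range (n+1), (z*I)^k / k.factorial)
      (I * ∑ k ∈ range n, (z*I)^k / k.factorial) z := by
    have h : ∀ k ∈ range (n+1), HasDerivAt (fun z : ℂ => (z*I)^k / k.factorial)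
        ((k : ℂ) * (z*I)^(k-1) * (1 * I) / k.factorial) z := by
      intro k _
      exact (((hasDerivAt_id z).mul_const I).pow k).div_const _
    have hsum := HasDerivAt.fun_sum h
    refine hsum.congr_deriv (Eq.symm ?_)
    rw [Finset.sum_range_succ']
    simp only [Nat.cast_zero, pow_zero, Nat.factorial_zero, Nat.cast_one, zero_mul, mul_zero,
      one_mul, zero_div, add_zero]
    rw [Finset.mul_sum]
    refine Finset.sum_congr rfl (fun k _ => ?_)
    push_cast [Nat.factorial_succ]
    have hk : ((k:ℂ)+1) ≠ 0 := by
      exact Nat.cast_add_one_ne_zero k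
    have hf : (k.factorial : ℂ) ≠ 0 := by exact_mod_cast k.factorial_ne_zero
    field_simp
  simpa [mul_sub] using h1.fun_sub h2


lemma expsum_neg (n : ℕ) (u : ℝ) :
    ‖Complex.exp ((-u : ℝ) * I) - ∑ k ∈ range n, (((-u : ℝ):ℂ)*I)^k / k.factorial‖
      = ‖Complex.exp ((u:ℝ) * I) - ∑ k ∈ range n, (((u : ℝ):ℂ)*I)^k / k.factorial‖ := by
  have h : Complex.exp ((-u : ℝ) * I) - ∑ k ∈ range n, (((-u : ℝ):ℂ)*I)^k / k.factorial
      = (starRingEnd ℂ) (Complex.exp ((u:ℝ) * I) - ∑ k ∈ range n, (((u : ℝ):ℂ)*I)^k / k.factorial) := by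
    rw [map_sub, map_sum, ← Complex.exp_conj]
    push_cast
    congr 1
    · congr 1; simp [Complex.conj_I]
    · refine Finset.sum_congr rfl (fun k _ => ?_)
      rw [map_div₀, map_pow, map_mul]
      simp [Complex.conj_I]
  rw [h, RCLike.norm_conj]

lemma expTaylor_norm_nonneg (n : ℕ) (u : ℝ) (hu : 0 ≤ u) :
    ‖Complex.exp (u * I) - ∑ k ∈ range n, ((u:ℂ)*I)^k / k.factorial‖
      ≤ u^n / n.factorial := by
  induction n generalizing u with
  | zero => simp [Complex.norm_exp_ofReal_mul_I]
  | succ n ih =>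
    set g : ℝ → ℂ := fun t => Complex.exp (t * I) - ∑ k ∈ range (n+1), ((t:ℂ)*I)^k / k.factorial
      with hg
    set f : ℝ → ℂ := fun t => I * (Complex.exp (t * I) - ∑ k ∈ range n, ((t:ℂ)*I)^k / k.factorial)
      with hf
    have hderiv : ∀ t ∈ Set.uIcc 0 u, HasDerivAt g (f t) t := by
      intro t _
      exact (hasDerivAt_expsum n (t:ℂ)).comp_ofReal
    have hfc : Continuous f := by fun_prop
    have hint : IntervalIntegrable f MeasureTheory.volume 0 u := hfc.intervalIntegrable _ _
    have hftc := intervalIntegral.integral_eq_sub_of_hasDerivAt hderiv hint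
    have hg0 : g 0 = 0 := by
      simp [hg, Finset.sum_range_succ']
    rw [hg0, sub_zero] at hftc
    have h1 : ‖g u‖ ≤ ∫ t in (0:ℝ)..u, ‖f t‖ := by
      rw [← hftc]
      exact intervalIntegral.norm_integral_le_integral_norm hu
    have h2 : (∫ t in (0:ℝ)..u, ‖f t‖) ≤ ∫ t in (0:ℝ)..u, t^n / n.factorial := by
      apply intervalIntegral.integral_mono_on hu (hfc.norm.intervalIntegrable _ _)
      · exact (Continuous.intervalIntegrable (by fun_prop) _ _)
      · intro t ht
        have := ih t ht.1
        simpa [hf, map_mul] using this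
    have h3 : (∫ t in (0:ℝ)..u, t^n / n.factorial) = u^(n+1) / (n+1).factorial := by
      rw [intervalIntegral.integral_div, integral_pow, zero_pow (Nat.succ_ne_zero n), sub_zero,
        div_div]
      push_cast [Nat.factorial_succ]
      ring_nf
    calc ‖g u‖ ≤ _ := h1
      _ ≤ _ := h2
      _ = _ := h3

lemma expTaylor_norm (n : ℕ) (u : ℝ) :
    ‖Complex.exp (u * I) - ∑ k ∈ range n, ((u:ℂ)*I)^k / k.factorial‖
      ≤ |u|^n / n.factorial := by
  rcases le_or_gt 0 u with hu | hu
  · rw [_root_.abs_of_nonneg hu]; exact expTaylor_norm_nonneg n u hu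
  · have h := expTaylor_norm_nonneg n (-u) (by linarith)
    rw [expsum_neg n u] at h
    rwa [_root_.abs_of_neg hu]

end ExpTaylor

open MeasureTheory Filter Topology Finset

variable {N : ℕ}

local notation "E" => EuclideanSpace ℝ (Fin N)

lemma pow_le_one_add_pow {r : ℝ} (hr : 0 ≤ r) {k s : ℕ} (hk : k ≤ s) :
    r ^ k ≤ 1 + r ^ s := by
  rcases le_or_gt r 1 with h | h
  · have : r ^ k ≤ 1 := pow_le_one₀ hr h
    have h2 : 0 ≤ r ^ s := pow_nonneg hr s
    linarith
  · have : r ^ k ≤ r ^ s := pow_le_pow_right₀ h.le hk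
    linarith

lemma coord_le_norm (v : E) (i : Fin N) : |v i| ≤ ‖v‖ := by
  rw [EuclideanSpace.norm_eq]
  rw [← Real.sqrt_sq_eq_abs]
  apply Real.sqrt_le_sqrt
  simp only [Real.norm_eq_abs, sq_abs]
  exact Finset.single_le_sum (f := fun j => v j ^ 2) (fun j _ => sq_nonneg _) (Finset.mem_univ i)

lemma abs_prod_pow_le (v : E) (β : Fin N → ℕ) :
    |∏ i, (v i) ^ (β i)| ≤ ‖v‖ ^ (∑ i, β i) := by
  rw [Finset.abs_prod, ← Finset.prod_pow_eq_pow_sum]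
  apply Finset.prod_le_prod (fun i _ => abs_nonneg _)
  intro i _
  rw [abs_pow]
  exact pow_le_pow_left₀ (abs_nonneg _) (coord_le_norm v i) _

lemma integrable_prod_pow (ν : Measure E) [IsProbabilityMeasure ν] {s : ℕ}
    (hfin : Integrable (fun v => ‖v‖ ^ s) ν) (β : Fin N → ℕ) (hβ : (∑ i, β i) ≤ s) :
    Integrable (fun v : E => ∏ i, (v i) ^ (β i)) ν := by
  have hc : Continuous (fun v : E => ∏ i, (v i) ^ (β i)) := by fun_prop
  refine (((integrable_const (1:ℝ)).add hfin).mono hc.aestronglyMeasurable ?_)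
  filter_upwards with v
  have h1 := (abs_prod_pow_le v β).trans (pow_le_one_add_pow (norm_nonneg v) hβ)
  have h2 : (0:ℝ) ≤ 1 + ‖v‖ ^ s := by positivity
  simp only [Pi.add_apply, Real.norm_eq_abs]
  rw [_root_.abs_of_nonneg h2]
  exact h1

lemma integrable_inner_pow (ν : Measure E) [IsProbabilityMeasure ν] {s : ℕ}
    (hfin : Integrable (fun v => ‖v‖ ^ s) ν) (x : E) {k : ℕ} (hk : k ≤ s) :
    Integrable (fun v : E => (inner ℝ x v : ℝ) ^ k) ν := by
  have hc : Continuous (fun v : E => (inner ℝ x v : ℝ) ^ k) := by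
    exact (continuous_const.inner continuous_id).pow k
  refine ((((integrable_const (1:ℝ)).add hfin).const_mul (‖x‖^k)).mono
    hc.aestronglyMeasurable ?_)
  filter_upwards with v
  have h1 : |(inner ℝ x v : ℝ)| ≤ ‖x‖ * ‖v‖ := abs_real_inner_le_norm x v
  have h2 : |(inner ℝ x v : ℝ)| ^ k ≤ (‖x‖ * ‖v‖) ^ k :=
    pow_le_pow_left₀ (abs_nonneg _) h1 k
  have h3 : ‖v‖ ^ k ≤ 1 + ‖v‖ ^ s := pow_le_one_add_pow (norm_nonneg v) hk
  have h4 : (0:ℝ) ≤ ‖x‖^k * (1 + ‖v‖^s) := by positivity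
  simp only [Pi.add_apply, Real.norm_eq_abs, abs_pow, _root_.abs_of_nonneg h4]
  calc |(inner ℝ x v : ℝ)| ^ k ≤ (‖x‖ * ‖v‖) ^ k := h2
    _ = ‖x‖^k * ‖v‖^k := mul_pow _ _ _
    _ ≤ ‖x‖^k * (1 + ‖v‖^s) := by
        exact mul_le_mul_of_nonneg_left h3 (by positivity)

lemma expTaylor_min (s : ℕ) (u : ℝ) :
    ‖Complex.exp (-((u:ℂ) * Complex.I)) - ∑ k ∈ Finset.range (s+1),
        (-((u:ℂ) * Complex.I))^k / k.factorial‖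
      ≤ min (|u|^(s+1) / (s+1).factorial) (2 * |u|^s / s.factorial) := by
  have key : -((u:ℂ) * Complex.I) = ((-u : ℝ) : ℂ) * Complex.I := by push_cast; ring
  rw [key]
  refine le_min ?_ ?_
  · have := expTaylor_norm (s+1) (-u)
    rwa [abs_neg] at this
  · have h1 := expTaylor_norm s (-u)
    rw [abs_neg] at h1
    have h2 : ‖(((-u:ℝ):ℂ) * Complex.I)^s / s.factorial‖ = |u|^s / s.factorial := by
      rw [norm_div, norm_pow, norm_mul]
      simp
    calc ‖Complex.exp (((-u:ℝ):ℂ) * Complex.I) - ∑ k ∈ Finset.range (s+1),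
            (((-u:ℝ):ℂ) * Complex.I)^k / k.factorial‖
        = ‖(Complex.exp (((-u:ℝ):ℂ) * Complex.I) - ∑ k ∈ Finset.range s,
            (((-u:ℝ):ℂ) * Complex.I)^k / k.factorial)
            - (((-u:ℝ):ℂ) * Complex.I)^s / s.factorial‖ := by
          rw [Finset.sum_range_succ]
          congr 1
          ring
      _ ≤ _ + _ := norm_sub_le _ _
      _ ≤ |u|^s / s.factorial + |u|^s / s.factorial := by
          rw [h2]; exact add_le_add h1 le_rfl
      _ = 2 * |u|^s / s.factorial := by ring

lemma integrable_cexp_inner (ν : Measure E) [IsProbabilityMeasure ν] (x : E) :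
    Integrable (fun v : E => Complex.exp (-(((inner ℝ x v : ℝ):ℂ) * Complex.I))) ν := by
  have hinner : Continuous (fun v : E => (inner ℝ x v : ℝ)) := continuous_const.inner continuous_id
  have hc : Continuous (fun v : E => Complex.exp (-(((inner ℝ x v : ℝ):ℂ) * Complex.I))) :=
    Complex.continuous_exp.comp (((Complex.continuous_ofReal.comp hinner).mul continuous_const).neg)
  refine (integrable_const (1:ℝ)).mono hc.aestronglyMeasurable ?_
  filter_upwards with v
  have : -(((inner ℝ x v : ℝ):ℂ) * Complex.I) = ((-(inner ℝ x v : ℝ) : ℝ):ℂ) * Complex.I := by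
    push_cast; ring
  rw [this, Complex.norm_exp_ofReal_mul_I]
  simp

lemma integrable_min_bound (ν : Measure E) [IsProbabilityMeasure ν] {s : ℕ}
    (hfin : Integrable (fun v => ‖v‖ ^ s) ν) (x : E) :
    Integrable (fun v : E => min (|(inner ℝ x v : ℝ)|^(s+1) / (s+1).factorial)
      (2 * |(inner ℝ x v : ℝ)|^s / s.factorial)) ν := by
  have habs : Integrable (fun v : E => 2 * |(inner ℝ x v : ℝ)|^s / s.factorial) ν := by
    have h := (integrable_inner_pow ν hfin x (le_refl s)).abs
    simp_rw [abs_pow] at h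
    exact (h.const_mul 2).div_const _
  have hc : Continuous (fun v : E => min (|(inner ℝ x v : ℝ)|^(s+1) / (s+1).factorial)
      (2 * |(inner ℝ x v : ℝ)|^s / s.factorial)) := by
    have hinner : Continuous (fun v : E => (inner ℝ x v : ℝ)) := continuous_const.inner continuous_id
    exact ((hinner.abs.pow _).div_const _).min ((continuous_const.mul (hinner.abs.pow _)).div_const _)
  refine habs.mono hc.aestronglyMeasurable ?_
  filter_upwards with v
  have h1 : (0:ℝ) ≤ min (|(inner ℝ x v : ℝ)|^(s+1) / (s+1).factorial)
      (2 * |(inner ℝ x v : ℝ)|^s / s.factorial) := le_min (by positivity) (by positivity)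
  have h2 : (0:ℝ) ≤ 2 * |(inner ℝ x v : ℝ)|^s / s.factorial := by positivity
  rw [Real.norm_eq_abs, Real.norm_eq_abs, _root_.abs_of_nonneg h1, _root_.abs_of_nonneg h2]
  exact min_le_right _ _

lemma charFun'_taylor (ν : Measure E) [IsProbabilityMeasure ν] {s : ℕ}
    (hfin : Integrable (fun v => ‖v‖ ^ s) ν) (x : E) :
    ‖charFun' ν x - ∑ k ∈ Finset.range (s+1), (-Complex.I)^k / k.factorial *
        ((∫ v, (inner ℝ x v : ℝ)^k ∂ν : ℝ) : ℂ)‖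
      ≤ ∫ v, min (|(inner ℝ x v : ℝ)|^(s+1) / (s+1).factorial)
          (2 * |(inner ℝ x v : ℝ)|^s / s.factorial) ∂ν := by
  have hterm : ∀ k ∈ Finset.range (s+1),
      Integrable (fun v : E => (-(((inner ℝ x v : ℝ):ℂ) * Complex.I))^k / k.factorial) ν := by
    intro k hk
    have hik := integrable_inner_pow ν hfin x (Finset.mem_range_succ_iff.mp hk)
    have : (fun v : E => (-(((inner ℝ x v : ℝ):ℂ) * Complex.I))^k / k.factorial)
        = fun v : E => ((-Complex.I)^k / k.factorial) * (((inner ℝ x v : ℝ)^k : ℝ) : ℂ) := by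
      funext v; push_cast; ring
    rw [this]
    exact (hik.ofReal.const_mul _)
  have hsumint : Integrable (fun v : E => ∑ k ∈ Finset.range (s+1),
      (-(((inner ℝ x v : ℝ):ℂ) * Complex.I))^k / k.factorial) ν :=
    integrable_finset_sum _ hterm
  have heq : charFun' ν x - ∑ k ∈ Finset.range (s+1), (-Complex.I)^k / k.factorial *
        ((∫ v, (inner ℝ x v : ℝ)^k ∂ν : ℝ) : ℂ)
      = ∫ v, (Complex.exp (-(((inner ℝ x v : ℝ):ℂ) * Complex.I))
          - ∑ k ∈ Finset.range (s+1), (-(((inner ℝ x v : ℝ):ℂ) * Complex.I))^k / k.factorial) ∂ν := by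
    rw [integral_sub (integrable_cexp_inner ν x) hsumint]
    unfold charFun'
    congr 1
    rw [integral_finset_sum _ hterm]
    refine Finset.sum_congr rfl (fun k hk => ?_)
    have : (fun v : E => (-(((inner ℝ x v : ℝ):ℂ) * Complex.I))^k / k.factorial)
        = fun v : E => ((-Complex.I)^k / k.factorial) * (((inner ℝ x v : ℝ)^k : ℝ) : ℂ) := by
      funext v; push_cast; ring
    rw [this, integral_const_mul]
    congr 1
    exact (integral_ofReal (f := fun v : E => (inner ℝ x v : ℝ) ^ k)).symm
  rw [heq]
  refine (norm_integral_le_integral_norm _).trans ?_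
  refine integral_mono ?_ (integrable_min_bound ν hfin x) ?_
  · exact ((integrable_cexp_inner ν x).sub hsumint).norm
  · intro v
    exact expTaylor_min s (inner ℝ x v : ℝ)

lemma remainder_tendsto (ν : Measure E) [IsProbabilityMeasure ν] {s : ℕ}
    (hfin : Integrable (fun v => ‖v‖ ^ s) ν) (x : E) :
    Tendsto (fun t : ℝ => ∫ v, min (t * |(inner ℝ x v : ℝ)|^(s+1) / (s+1).factorial)
        (2 * |(inner ℝ x v : ℝ)|^s / s.factorial) ∂ν) (𝓝[>] (0:ℝ)) (𝓝 0) := by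
  have hinner : Continuous (fun v : E => (inner ℝ x v : ℝ)) := continuous_const.inner continuous_id
  have habs : Integrable (fun v : E => 2 * |(inner ℝ x v : ℝ)|^s / s.factorial) ν := by
    have h := (integrable_inner_pow ν hfin x (le_refl s)).abs
    simp_rw [abs_pow] at h
    exact (h.const_mul 2).div_const _
  have main : Tendsto (fun t : ℝ => ∫ v, min (t * |(inner ℝ x v : ℝ)|^(s+1) / (s+1).factorial)
      (2 * |(inner ℝ x v : ℝ)|^s / s.factorial) ∂ν) (𝓝[>] (0:ℝ)) (𝓝 (∫ v : E, (0:ℝ) ∂ν)) := by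
    refine tendsto_integral_filter_of_dominated_convergence
      (fun v => 2 * |(inner ℝ x v : ℝ)|^s / s.factorial) ?_ ?_ habs ?_
    · filter_upwards with t
      exact (((continuous_const.mul (hinner.abs.pow _)).div_const _).min
        ((continuous_const.mul (hinner.abs.pow _)).div_const _)).aestronglyMeasurable
    · filter_upwards [self_mem_nhdsWithin] with t (ht : 0 < t)
      filter_upwards with v
      have h1 : (0:ℝ) ≤ min (t * |(inner ℝ x v : ℝ)|^(s+1) / (s+1).factorial)
          (2 * |(inner ℝ x v : ℝ)|^s / s.factorial) := le_min (by positivity) (by positivity)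
      rw [Real.norm_eq_abs, _root_.abs_of_nonneg h1]
      exact min_le_right _ _
    · filter_upwards with v
      refine tendsto_of_tendsto_of_tendsto_of_le_of_le' (g := fun _ => (0:ℝ))
        (h := fun t => t * |(inner ℝ x v : ℝ)|^(s+1) / (s+1).factorial)
        tendsto_const_nhds ?_ ?_ ?_
      · have : Tendsto (fun t : ℝ => t) (𝓝[>] (0:ℝ)) (𝓝 0) :=
          tendsto_id.mono_left nhdsWithin_le_nhds
        simpa using (this.mul_const (|(inner ℝ x v : ℝ)|^(s+1))).div_const ((s+1).factorial : ℝ)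
      · filter_upwards [self_mem_nhdsWithin] with t (ht : 0 < t)
        exact le_min (by positivity) (by positivity)
      · filter_upwards with t
        exact min_le_left _ _
  simpa using main

lemma min_scaling (s : ℕ) {t : ℝ} (ht : 0 < t) (u : ℝ) :
    min (|t * u|^(s+1) / (s+1).factorial) (2 * |t * u|^s / s.factorial)
      = t^s * min (t * |u|^(s+1) / (s+1).factorial) (2 * |u|^s / s.factorial) := by
  rw [abs_mul, _root_.abs_of_pos ht, mul_pow, mul_pow,
    mul_min_of_nonneg _ _ (pow_nonneg ht.le s)]
  congr 1 <;> field_simp <;> ring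

lemma charFun'_taylor_smul (ν : Measure E) [IsProbabilityMeasure ν] {s : ℕ}
    (hfin : Integrable (fun v => ‖v‖ ^ s) ν) (x : E) {t : ℝ} (ht : 0 < t) :
    ‖charFun' ν (t • x) - ∑ k ∈ Finset.range (s+1), (-Complex.I)^k / k.factorial *
        ((t^k * ∫ v, (inner ℝ x v : ℝ)^k ∂ν : ℝ) : ℂ)‖
      ≤ t^s * ∫ v, min (t * |(inner ℝ x v : ℝ)|^(s+1) / (s+1).factorial)
          (2 * |(inner ℝ x v : ℝ)|^s / s.factorial) ∂ν := by
  have h := charFun'_taylor ν hfin (t • x)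
  have hip : ∀ v : E, (inner ℝ (t • x) v : ℝ) = t * (inner ℝ x v : ℝ) := fun v =>
    real_inner_smul_left x v t
  have hmom : ∀ k : ℕ, (∫ v, (inner ℝ (t • x) v : ℝ)^k ∂ν) = t^k * ∫ v, (inner ℝ x v : ℝ)^k ∂ν := by
    intro k
    simp_rw [hip, mul_pow]
    exact integral_const_mul _ _
  simp_rw [hmom] at h
  simp_rw [hip] at h
  refine h.trans (le_of_eq ?_)
  have : ∀ v : E, min (|t * (inner ℝ x v : ℝ)|^(s+1) / (s+1).factorial)
      (2 * |t * (inner ℝ x v : ℝ)|^s / s.factorial)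
      = t^s * min (t * |(inner ℝ x v : ℝ)|^(s+1) / (s+1).factorial)
        (2 * |(inner ℝ x v : ℝ)|^s / s.factorial) := fun v => min_scaling s ht _
  simp_rw [this]
  exact integral_const_mul _ _

lemma key_poly (s : ℕ) (d : ℕ → ℂ) (C : ℝ) (G : ℝ → ℝ)
    (hbound : ∀ᶠ t : ℝ in 𝓝[>] (0:ℝ), ‖∑ k ∈ Finset.range (s+1), d k * (t:ℂ)^k‖ ≤ G t)
    (hG : Tendsto (fun t => G t / t^s) (𝓝[>] (0:ℝ)) (𝓝 C)) :
    ‖d s‖ ≤ C ∧ ∀ k < s, d k = 0 := by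
  induction s generalizing d G with
  | zero =>
    refine ⟨?_, fun k hk => absurd hk (Nat.not_lt_zero k)⟩
    have h1 : ∀ᶠ t in 𝓝[>] (0:ℝ), ‖d 0‖ ≤ G t / t^0 := by
      filter_upwards [hbound] with t ht
      simpa using ht
    exact ge_of_tendsto hG h1
  | succ s ih =>
    have htne : ∀ᶠ t : ℝ in 𝓝[>] (0:ℝ), 0 < t := self_mem_nhdsWithin
    -- G tends to 0
    have hGt : Tendsto G (𝓝[>] (0:ℝ)) (𝓝 0) := by
      have hpow : Tendsto (fun t : ℝ => t^(s+1)) (𝓝[>] (0:ℝ)) (𝓝 0) := by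
        have := ((continuous_pow (s+1)).tendsto (0:ℝ)).mono_left (nhdsWithin_le_nhds (s := Set.Ioi 0))
        simpa [zero_pow (Nat.succ_ne_zero s)] using this
      have h1 := hG.mul hpow
      rw [mul_zero] at h1
      refine h1.congr' ?_
      filter_upwards [htne] with t ht
      field_simp
    -- the sum tends to 0
    have hsumzero : Tendsto (fun t : ℝ => ∑ k ∈ Finset.range (s+2), d k * (t:ℂ)^k)
        (𝓝[>] (0:ℝ)) (𝓝 0) := by
      rw [tendsto_zero_iff_norm_tendsto_zero]
      refine tendsto_of_tendsto_of_tendsto_of_le_of_le' (g := fun _ => (0:ℝ)) (h := G)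
        tendsto_const_nhds hGt ?_ ?_
      · filter_upwards with t; positivity
      · exact hbound
    -- the sum tends to d 0
    have hc : Continuous (fun t : ℝ => ∑ k ∈ Finset.range (s+2), d k * (t:ℂ)^k) := by
      refine continuous_finset_sum _ (fun k _ => ?_)
      exact continuous_const.mul ((Complex.continuous_ofReal.pow k))
    have hsumd0 : Tendsto (fun t : ℝ => ∑ k ∈ Finset.range (s+2), d k * (t:ℂ)^k)
        (𝓝[>] (0:ℝ)) (𝓝 (d 0)) := by
      have h2 := (hc.tendsto 0).mono_left (nhdsWithin_le_nhds (s := Set.Ioi 0))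
      have h3 : (∑ k ∈ Finset.range (s+2), d k * ((0:ℝ):ℂ)^k) = d 0 := by
        rw [Finset.sum_range_succ']
        simp [zero_pow]
      rwa [h3] at h2
    have hd0 : d 0 = 0 := tendsto_nhds_unique hsumd0 hsumzero
    -- shift
    have hfact : ∀ t : ℝ, (∑ k ∈ Finset.range (s+2), d k * (t:ℂ)^k)
        = (t:ℂ) * ∑ k ∈ Finset.range (s+1), d (k+1) * (t:ℂ)^k := by
      intro t
      rw [Finset.sum_range_succ', hd0, Finset.mul_sum]
      simp only [pow_zero, mul_one, zero_mul, add_zero]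
      refine Finset.sum_congr rfl (fun k _ => ?_)
      ring
    have hbound' : ∀ᶠ t : ℝ in 𝓝[>] (0:ℝ),
        ‖∑ k ∈ Finset.range (s+1), d (k+1) * (t:ℂ)^k‖ ≤ G t / t := by
      filter_upwards [hbound, htne] with t hb ht
      rw [hfact t, norm_mul, Complex.norm_real, Real.norm_eq_abs, _root_.abs_of_pos ht] at hb
      rw [le_div_iff₀ ht]
      linarith [hb]
    have hG' : Tendsto (fun t : ℝ => (G t / t) / t^s) (𝓝[>] (0:ℝ)) (𝓝 C) := by
      refine hG.congr' ?_
      filter_upwards [htne] with t ht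
      rw [div_div, ← pow_succ']
    obtain ⟨h1, h2⟩ := ih (fun k => d (k+1)) (fun t => G t / t) hbound' hG'
    refine ⟨h1, fun k hk => ?_⟩
    match k with
    | 0 => exact hd0
    | (k+1) => exact h2 k (by omega)

lemma inner_eq_sum (x v : E) : (inner ℝ x v : ℝ) = ∑ i, x i * v i := by
  simp [PiLp.inner_apply, RCLike.inner_apply, mul_comm]

lemma inner_pow_integral_expand (ν : Measure E) [IsProbabilityMeasure ν] {s : ℕ}
    (hfin : Integrable (fun v => ‖v‖^s) ν) (x : E) {k : ℕ} (hk : k ≤ s) :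
    ∫ v, (inner ℝ x v : ℝ)^k ∂ν
      = ∑ β ∈ Finset.piAntidiag Finset.univ k,
          (Nat.multinomial Finset.univ β : ℝ) * (∏ i, x i ^ β i)
            * ∫ v, ∏ i, (v i)^(β i) ∂ν := by
  have hmem : ∀ β ∈ Finset.piAntidiag (Finset.univ : Finset (Fin N)) k, (∑ i, β i) ≤ s := by
    intro β hβ
    rw [Finset.mem_piAntidiag] at hβ
    rw [show (∑ i, β i) = Finset.univ.sum β from rfl, hβ.1]
    exact hk
  have hexp : ∀ v : E, (inner ℝ x v : ℝ)^k
      = ∑ β ∈ Finset.piAntidiag Finset.univ k, ((Nat.multinomial Finset.univ β : ℝ)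
          * (∏ i, x i ^ β i)) * (∏ i, (v i)^(β i)) := by
    intro v
    rw [inner_eq_sum, Finset.sum_pow_eq_sum_piAntidiag]
    refine Finset.sum_congr rfl (fun β hβ => ?_)
    rw [mul_assoc]
    congr 1
    rw [← Finset.prod_mul_distrib]
    refine Finset.prod_congr rfl (fun i _ => ?_)
    rw [mul_pow]
  simp_rw [hexp]
  rw [integral_finset_sum]
  · refine Finset.sum_congr rfl (fun β hβ => ?_)
    rw [integral_const_mul, mul_assoc]
  · intro β hβ
    exact (integrable_prod_pow ν hfin β (hmem β hβ)).const_mul _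

open ENNReal

lemma charFun'_diff_le {s : ℕ} (ν₁ ν₂ : Measure E)
    (hne : dFourier (s : ℝ) ν₁ ν₂ ≠ ⊤) {y : E} (hy : y ≠ 0) :
    ‖charFun' ν₁ y - charFun' ν₂ y‖ ≤ (dFourier (s : ℝ) ν₁ ν₂).toReal * ‖y‖ ^ s := by
  have h1 : ENNReal.ofReal (‖charFun' ν₁ y - charFun' ν₂ y‖ / ‖y‖ ^ (s:ℝ))
      ≤ dFourier (s : ℝ) ν₁ ν₂ := by
    refine le_iSup_of_le y ?_
    exact le_iSup_of_le hy le_rfl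
  have h2 := ENNReal.toReal_mono hne h1
  rw [ENNReal.toReal_ofReal (by positivity)] at h2
  have hys : (0:ℝ) < ‖y‖ ^ (s:ℝ) := by
    apply Real.rpow_pos_of_pos
    simpa [norm_pos_iff] using hy
  rw [div_le_iff₀ hys] at h2
  calc ‖charFun' ν₁ y - charFun' ν₂ y‖
      ≤ (dFourier (s:ℝ) ν₁ ν₂).toReal * ‖y‖ ^ (s:ℝ) := h2
    _ = _ := by rw [Real.rpow_natCast]

lemma inner_pow_eq {N : ℕ} {s : ℕ}
    (μ : ℕ → Measure (EuclideanSpace ℝ (Fin N)))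
    (hprob : ∀ n, IsProbabilityMeasure (μ n))
    (hmom_fin : ∀ n, Integrable (fun v => ‖v‖ ^ s) (μ n))
    (hmom_same : ∀ n, ∀ β : Fin N → ℕ, (∑ i, β i) ≤ s →
      ∫ v, ∏ i, (v i) ^ (β i) ∂(μ n) = ∫ v, ∏ i, (v i) ^ (β i) ∂(μ 0))
    (μlim : Measure (EuclideanSpace ℝ (Fin N)))
    (hlimprob : IsProbabilityMeasure μlim)
    (hlimfin : Integrable (fun v => ‖v‖ ^ s) μlim)
    (hconv : Tendsto (fun n => dFourier (s : ℝ) (μ n) μlim) atTop (𝓝 0))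
    (x : EuclideanSpace ℝ (Fin N)) {k : ℕ} (hk : k ≤ s) :
    ∫ v, (inner ℝ x v : ℝ)^k ∂μlim = ∫ v, (inner ℝ x v : ℝ)^k ∂(μ 0) := by
  haveI := hprob 0
  by_cases hx : x = 0
  · subst hx
    simp only [inner_zero_left]
    rw [integral_const, integral_const, probReal_univ, probReal_univ]
  set a : ℕ → ℝ := fun j => ∫ v, (inner ℝ x v : ℝ)^j ∂(μ 0) with ha
  set b : ℕ → ℝ := fun j => ∫ v, (inner ℝ x v : ℝ)^j ∂μlim with hb
  have hμn_a : ∀ n, ∀ j, j ≤ s → (∫ v, (inner ℝ x v : ℝ)^j ∂(μ n)) = a j := by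
    intro n j hj
    haveI := hprob n
    rw [ha]
    simp only
    rw [inner_pow_integral_expand (μ n) (hmom_fin n) x hj,
        inner_pow_integral_expand (μ 0) (hmom_fin 0) x hj]
    refine Finset.sum_congr rfl (fun γ hγ => ?_)
    rw [Finset.mem_piAntidiag] at hγ
    have hγs : (∑ i, γ i) ≤ s := by
      rw [show (∑ i, γ i) = Finset.univ.sum γ from rfl, hγ.1]; exact hj
    rw [hmom_same n γ hγs]
  set d : ℕ → ℂ := fun j => (-Complex.I)^j / j.factorial * (((b j : ℝ):ℂ) - ((a j : ℝ):ℂ))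
    with hd
  set eps : ℕ → ℝ := fun n => (dFourier (s:ℝ) (μ n) μlim).toReal with heps
  have hepslim : Tendsto eps atTop (𝓝 0) := by
    have := (ENNReal.tendsto_toReal (a := 0) (by simp)).comp hconv
    simpa [heps, Function.comp_def] using this
  have hevfin : ∀ᶠ n in atTop, dFourier (s:ℝ) (μ n) μlim ≠ ⊤ := by
    filter_upwards [hconv.eventually_lt_const (show (0:ℝ≥0∞) < 1 by norm_num)] with n hn
    exact (hn.trans_le le_top).ne
  have hds : ∀ n, dFourier (s:ℝ) (μ n) μlim ≠ ⊤ →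
      (∀ j < s, d j = 0) ∧ ‖d s‖ ≤ eps n * ‖x‖^s := by
    intro n hne
    haveI := hprob n
    set Rlim : ℝ → ℝ := fun t => ∫ v, min (t * |(inner ℝ x v : ℝ)|^(s+1) / (s+1).factorial)
        (2 * |(inner ℝ x v : ℝ)|^s / s.factorial) ∂μlim with hRlim
    set Rn : ℝ → ℝ := fun t => ∫ v, min (t * |(inner ℝ x v : ℝ)|^(s+1) / (s+1).factorial)
        (2 * |(inner ℝ x v : ℝ)|^s / s.factorial) ∂(μ n) with hRn
    have hbound : ∀ᶠ t : ℝ in 𝓝[>] (0:ℝ), ‖∑ j ∈ Finset.range (s+1), d j * (t:ℂ)^j‖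
        ≤ t^s * Rlim t + eps n * (t^s * ‖x‖^s) + t^s * Rn t := by
      filter_upwards [self_mem_nhdsWithin] with t (ht : 0 < t)
      have h1 := charFun'_taylor_smul μlim hlimfin x ht
      have h2 := charFun'_taylor_smul (μ n) (hmom_fin n) x ht
      have hsum_eq : (∑ j ∈ Finset.range (s+1), (-Complex.I)^j / j.factorial *
            ((t^j * ∫ v, (inner ℝ x v : ℝ)^j ∂(μ n) : ℝ) : ℂ))
          = ∑ j ∈ Finset.range (s+1), (-Complex.I)^j / j.factorial *
            ((t^j * a j : ℝ) : ℂ) := by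
        refine Finset.sum_congr rfl (fun j hj => ?_)
        rw [hμn_a n j (Finset.mem_range_succ_iff.mp hj)]
      rw [hsum_eq] at h2
      have h3 : ‖charFun' (μ n) (t • x) - charFun' μlim (t • x)‖ ≤ eps n * (t^s * ‖x‖^s) := by
        have := charFun'_diff_le (μ n) μlim hne (smul_ne_zero ht.ne' hx)
        rw [norm_smul, Real.norm_eq_abs, _root_.abs_of_pos ht, mul_pow] at this
        rw [heps]
        linarith [this]
      have halg : (∑ j ∈ Finset.range (s+1), d j * (t:ℂ)^j)
          = (∑ j ∈ Finset.range (s+1), (-Complex.I)^j / j.factorial *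
              ((t^j * b j : ℝ) : ℂ) - charFun' μlim (t • x))
            + (charFun' μlim (t • x) - charFun' (μ n) (t • x))
            + (charFun' (μ n) (t • x) - ∑ j ∈ Finset.range (s+1),
              (-Complex.I)^j / j.factorial * ((t^j * a j : ℝ) : ℂ)) := by
        rw [hd]
        simp only
        rw [sub_add_sub_cancel, sub_add_sub_cancel, ← Finset.sum_sub_distrib]
        refine Finset.sum_congr rfl (fun j _ => ?_)
        push_cast
        ring
      rw [halg]
      refine le_trans (norm_add_le _ _) ?_
      refine le_trans (add_le_add (norm_add_le _ _) le_rfl) ?_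
      refine add_le_add (add_le_add ?_ ?_) ?_
      · rw [norm_sub_rev]; exact h1
      · rw [norm_sub_rev]; exact h3
      · exact h2
    have hG : Tendsto (fun t : ℝ => (t^s * Rlim t + eps n * (t^s * ‖x‖^s) + t^s * Rn t) / t^s)
        (𝓝[>] (0:ℝ)) (𝓝 (eps n * ‖x‖^s)) := by
      have hlim1 := remainder_tendsto μlim hlimfin x
      have hlim2 := remainder_tendsto (μ n) (hmom_fin n) x
      have hmain : Tendsto (fun t : ℝ => Rlim t + eps n * ‖x‖^s + Rn t) (𝓝[>] (0:ℝ))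
          (𝓝 (eps n * ‖x‖^s)) := by
        have := (hlim1.add (tendsto_const_nhds (x := eps n * ‖x‖^s))).add hlim2
        simpa using this
      refine hmain.congr' ?_
      filter_upwards [self_mem_nhdsWithin] with t (ht : 0 < t)
      have hts : t^s ≠ 0 := pow_ne_zero _ ht.ne'
      field_simp
    obtain ⟨h1, h2⟩ := key_poly s d _ _ hbound hG
    exact ⟨h2, h1⟩
  have hdall : ∀ j, j ≤ s → d j = 0 := by
    intro j hj
    rcases lt_or_eq_of_le hj with hlt | heq
    · obtain ⟨n, hn⟩ := hevfin.exists
      exact (hds n hn).1 j hlt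
    · subst heq
      have hev : ∀ᶠ n in atTop, ‖d j‖ ≤ eps n * ‖x‖^j := by
        filter_upwards [hevfin] with n hn
        exact (hds n hn).2
      have hlim : Tendsto (fun n => eps n * ‖x‖^j) atTop (𝓝 0) := by
        simpa using hepslim.mul_const (‖x‖^j)
      have := ge_of_tendsto hlim hev
      have hnorm : ‖d j‖ = 0 := le_antisymm this (norm_nonneg _)
      exact norm_eq_zero.mp hnorm
  have hdk := hdall k hk
  rw [hd] at hdk
  simp only at hdk
  have hne1 : ((-Complex.I)^k / k.factorial) ≠ 0 := by
    apply div_ne_zero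
    · simp [Complex.I_ne_zero]
    · exact_mod_cast Nat.cast_ne_zero.mpr k.factorial_ne_zero
  have := (mul_eq_zero.mp hdk).resolve_left hne1
  have hba : (b k : ℂ) = (a k : ℂ) := by linear_combination this
  exact_mod_cast hba


/-- If probability measures μ_n all have moments M_β up to order s and
d_s(μ_n, μ) → 0 where μ has finite absolute moments up to order s, then μ has
the same moments M_β up to order s. -/
theorem moments_of_dFourier_limit (N : ℕ) (hN : 1 ≤ N) (s : ℕ) (hs : 1 ≤ s)
    (M : (Fin N → ℕ) → ℝ)
    (μ : ℕ → Measure (EuclideanSpace ℝ (Fin N)))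
    (hprob : ∀ n, IsProbabilityMeasure (μ n))
    (hmom_fin : ∀ n, Integrable (fun v => ‖v‖ ^ s) (μ n))
    (hmom_eq : ∀ n, ∀ β : Fin N → ℕ, (∑ i, β i) ≤ s →
      ∫ v, ∏ i, (v i) ^ (β i) ∂(μ n) = M β)
    (μlim : Measure (EuclideanSpace ℝ (Fin N)))
    (hlimprob : IsProbabilityMeasure μlim)
    (hlimfin : Integrable (fun v => ‖v‖ ^ s) μlim)
    (hconv : Tendsto (fun n => dFourier (s : ℝ) (μ n) μlim) atTop (𝓝 0)) :
    ∀ β : Fin N → ℕ, (∑ i, β i) ≤ s →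
      ∫ v, ∏ i, (v i) ^ (β i) ∂μlim = M β := by
  intro β hβ
  haveI := hprob 0
  have hmom_same : ∀ n, ∀ γ : Fin N → ℕ, (∑ i, γ i) ≤ s →
      ∫ v, ∏ i, (v i) ^ (γ i) ∂(μ n) = ∫ v, ∏ i, (v i) ^ (γ i) ∂(μ 0) := by
    intro n γ hγ
    rw [hmom_eq n γ hγ, hmom_eq 0 γ hγ]
  set k := ∑ i, β i with hk
  -- inner product moments agree
  have hip : ∀ x : EuclideanSpace ℝ (Fin N),
      ∫ v, (inner ℝ x v : ℝ)^k ∂μlim = ∫ v, (inner ℝ x v : ℝ)^k ∂(μ 0) :=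
    fun x => inner_pow_eq μ hprob hmom_fin hmom_same μlim hlimprob hlimfin hconv x hβ
  -- expand both sides
  have hexp : ∀ x : EuclideanSpace ℝ (Fin N),
      ∑ γ ∈ Finset.piAntidiag Finset.univ k,
        ((Nat.multinomial Finset.univ γ : ℝ)
          * ((∫ v, ∏ i, (v i)^(γ i) ∂μlim) - ∫ v, ∏ i, (v i)^(γ i) ∂(μ 0)))
          * (∏ i, x i ^ γ i) = 0 := by
    intro x
    have h1 := inner_pow_integral_expand μlim hlimfin x hβ
    have h2 := inner_pow_integral_expand (μ 0) (hmom_fin 0) x hβ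
    have h3 := hip x
    rw [h1, h2] at h3
    have h4 := sub_eq_zero.mpr h3
    rw [← Finset.sum_sub_distrib] at h4
    rw [← h4]
    refine Finset.sum_congr rfl (fun γ _ => ?_)
    ring
  -- polynomial identity
  set c : (Fin N → ℕ) → ℝ := fun γ => (Nat.multinomial Finset.univ γ : ℝ)
    * ((∫ v, ∏ i, (v i)^(γ i) ∂μlim) - ∫ v, ∏ i, (v i)^(γ i) ∂(μ 0)) with hc
  set p : MvPolynomial (Fin N) ℝ := ∑ γ ∈ Finset.piAntidiag Finset.univ k,
    MvPolynomial.monomial (Finsupp.equivFunOnFinite.symm γ) (c γ) with hp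
  have heval : ∀ g : Fin N → ℝ, MvPolynomial.eval g p = 0 := by
    intro g
    rw [hp, map_sum]
    have : ∀ γ ∈ Finset.piAntidiag (Finset.univ : Finset (Fin N)) k,
        MvPolynomial.eval g (MvPolynomial.monomial (Finsupp.equivFunOnFinite.symm γ) (c γ))
          = c γ * ∏ i, g i ^ γ i := by
      intro γ _
      rw [MvPolynomial.eval_monomial]
      congr 1
      rw [Finsupp.prod_pow]
      rfl
    rw [Finset.sum_congr rfl this]
    exact hexp (WithLp.toLp 2 g)
  have hp0 : p = 0 := MvPolynomial.funext (fun g => by rw [heval g, map_zero])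
  -- extract coefficient
  have hcoeff : MvPolynomial.coeff (Finsupp.equivFunOnFinite.symm β) p = c β := by
    rw [hp, MvPolynomial.coeff_sum]
    rw [Finset.sum_eq_single β]
    · rw [MvPolynomial.coeff_monomial, if_pos rfl]
    · intro γ hγ hγβ
      rw [MvPolynomial.coeff_monomial, if_neg]
      intro hcon
      exact hγβ (Finsupp.equivFunOnFinite.symm.injective hcon)
    · intro hcon
      exfalso
      apply hcon
      rw [Finset.mem_piAntidiag]
      exact ⟨rfl, fun i _ => Finset.mem_univ i⟩
  rw [hp0] at hcoeff
  simp only [MvPolynomial.coeff_zero] at hcoeff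
  rw [hc] at hcoeff
  simp only at hcoeff
  have hmul : (Nat.multinomial Finset.univ β : ℝ) ≠ 0 := by
    exact_mod_cast (Nat.multinomial_pos _ _).ne'
  have hz := (mul_eq_zero.mp hcoeff.symm).resolve_left hmul
  have := sub_eq_zero.mp hz
  rw [this, hmom_eq 0 β hβ]
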